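/- Let E and G be finite nonempty sets, u : E × G → E a map, q a probability vector on G, and k ∈ E. Let (Ω, 𝓕, ℙ) be a probability space carrying an i.i.d. sequence (Y_n)_{n≥1} of G-valued random variables, each distributed according to q. Define X_0 = k and X_n = u(X_{n−1}, Y_n) for n ≥ 1, and let 𝓕*_n = σ(Y_1, …, Y_n) (with 𝓕*_0 trivial). Then for every n ≥ 0, m ≥ 0 and every function f : E → ℝ, the conditional expectation satisfies E[f(X_{n+m}) | 𝓕*_n] = (P^m f)(X_n) almost surely, where P is the stochastic matrix with entries P_{ij} = ∑_{g∈G, u(i,g)=j} q_g and (P^m f)(i) = ∑_j (P^m)_{ij} f(j). -/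

import Mathlib

open MeasureTheory ProbabilityTheory

/-- In the setting of Statement 5, with `𝓕*_n = σ(Y_1, …, Y_n)` (trivial
for `n = 0`; here `Y n` stands for `Y_{n+1}`), for all `n, m ≥ 0` and `f : E → ℝ`,
`E[f (X_{n+m}) | 𝓕*_n] = (P^m f) (X_n)` a.s., where `P i j = ∑_{g : u(i,g) = j} q g` and
`(P^m f) i = ∑ j, (P^m) i j * f j`. -/
theorem stmt6 {E G : Type*} [Fintype E] [Fintype G] [Nonempty E] [Nonempty G]
    [DecidableEq E] [DecidableEq G]
    [mG : MeasurableSpace G] [MeasurableSingletonClass G]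
    (u : E × G → E) (q : G → ℝ) (hq0 : ∀ g, 0 ≤ q g) (hq1 : ∑ g, q g = 1) (k : E)
    {Ω : Type*} [MeasurableSpace Ω] (μ : Measure Ω) [IsProbabilityMeasure μ]
    (Y : ℕ → Ω → G) (hYmeas : ∀ n, Measurable (Y n))
    (hYindep : iIndepFun Y μ)
    (hYlaw : ∀ n g, μ {ω | Y n ω = g} = ENNReal.ofReal (q g))
    (X : ℕ → Ω → E) (hX0 : ∀ ω, X 0 ω = k)
    (hX : ∀ n ω, X (n + 1) ω = u (X n ω, Y n ω)) :
    ∀ (n m : ℕ) (f : E → ℝ),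
      μ[fun ω => f (X (n + m) ω) |
          ⨆ i ∈ Finset.range n, MeasurableSpace.comap (Y i) mG]
        =ᵐ[μ] fun ω =>
          ∑ j, ((Matrix.of fun i j' => ∑ g, if u (i, g) = j' then q g else 0) ^ m)
            (X n ω) j * f j := by
  classical
  set P : Matrix E E ℝ := Matrix.of fun i j' => ∑ g, if u (i, g) = j' then q g else 0 with hP
  set F : ℕ → MeasurableSpace Ω :=
    fun n => ⨆ i ∈ Finset.range n, MeasurableSpace.comap (Y i) mG with hF
  have hFle : ∀ n, F n ≤ ‹MeasurableSpace Ω› := fun n =>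
    iSup₂_le fun i _ => (hYmeas i).comap_le
  have hFmono : ∀ n, F n ≤ F (n + 1) := fun n =>
    biSup_mono fun i hi => Finset.mem_range.2 (Nat.lt_succ_of_lt (Finset.mem_range.1 hi))
  have hYF : ∀ n, MeasurableSpace.comap (Y n) mG ≤ F (n + 1) := fun n =>
    le_biSup (fun i => MeasurableSpace.comap (Y i) mG) (Finset.self_mem_range_succ n)
  -- measurability of the events {X n = e}
  have hXmeasF : ∀ n e, MeasurableSet[F n] {ω | X n ω = e} := by
    intro n
    induction n with
    | zero =>
      intro e
      by_cases hk : k = e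
      · have : {ω | X 0 ω = e} = Set.univ := by ext ω; simp [hX0, hk]
        rw [this]; exact @MeasurableSet.univ Ω (F 0)
      · have : {ω | X 0 ω = e} = ∅ := by ext ω; simp [hX0, hk]
        rw [this]; exact @MeasurableSet.empty Ω (F 0)
    | succ n ih =>
      intro e
      have hset : {ω | X (n + 1) ω = e} =
          ⋃ i : E, ⋃ g : G, {ω | X n ω = i ∧ Y n ω = g ∧ u (i, g) = e} := by
        ext ω
        simp only [Set.mem_setOf_eq, Set.mem_iUnion, hX]
        constructor
        · intro h; exact ⟨X n ω, Y n ω, rfl, rfl, h⟩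
        · rintro ⟨i, g, h1, h2, h3⟩; rw [h1, h2]; exact h3
      rw [hset]
      refine MeasurableSet.iUnion fun i => MeasurableSet.iUnion fun g => ?_
      by_cases h : u (i, g) = e
      · have : {ω | X n ω = i ∧ Y n ω = g ∧ u (i, g) = e} =
            {ω | X n ω = i} ∩ {ω | Y n ω = g} := by ext ω; simp [h]
        rw [this]
        exact ((hFmono n) _ (ih i)).inter
          (hYF n _ ⟨{g}, measurableSet_singleton g, rfl⟩)
      · have : {ω | X n ω = i ∧ Y n ω = g ∧ u (i, g) = e} = ∅ := by ext ω; simp [h]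
        rw [this]; exact @MeasurableSet.empty Ω (F (n + 1))
  -- representation of compositions h ∘ X N as finite sums of indicators
  have hsum : ∀ (N : ℕ) (h : E → ℝ),
      (fun ω => h (X N ω)) =
        ∑ e : E, ({ω' | X N ω' = e}).indicator (fun _ => h e) := by
    intro N h
    funext ω
    rw [Finset.sum_apply, Finset.sum_eq_single (X N ω)]
    · simp [Set.indicator_apply]
    · intro b _ hb
      simp [Set.indicator_apply, Ne.symm hb]
    · simp
  have hSM : ∀ (N : ℕ) (h : E → ℝ), StronglyMeasurable[F N] fun ω => h (X N ω) := by
    intro N h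
    rw [hsum]
    exact Finset.stronglyMeasurable_sum _ fun e _ =>
      stronglyMeasurable_const.indicator (hXmeasF N e)
  have hInt : ∀ (N : ℕ) (h : E → ℝ), Integrable (fun ω => h (X N ω)) μ := by
    intro N h
    rw [hsum]
    exact integrable_finset_sum' _ fun e _ =>
      (integrable_const _).indicator (hFle N _ (hXmeasF N e))
  -- independence of Y N and F N
  have hindep : ∀ N, Indep (MeasurableSpace.comap (Y N) mG) (F N) μ := by
    intro N
    have h := ProbabilityTheory.indep_iSup_of_disjoint
      (m := fun i => MeasurableSpace.comap (Y i) mG)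
      (fun i => (hYmeas i).comap_le) ((iIndepFun_iff_iIndep _ _ _).1 hYindep)
      (S := {N}) (T := {i | i < N})
      (by simp [Set.disjoint_left])
    have h1 : (⨆ i ∈ ({N} : Set ℕ), MeasurableSpace.comap (Y i) mG) =
        MeasurableSpace.comap (Y N) mG := by simp
    have h2 : (⨆ i ∈ ({i | i < N} : Set ℕ), MeasurableSpace.comap (Y i) mG) = F N := by
      rw [hF]
      simp [Finset.mem_range]
    rwa [h1, h2] at h
  -- conditional expectation of the indicator of {Y N = g} given F N
  have hcondind : ∀ (N : ℕ) (g : G),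
      μ[({ω | Y N ω = g}).indicator (fun _ => (1 : ℝ)) | F N] =ᵐ[μ] fun _ => q g := by
    intro N g
    have hsm : StronglyMeasurable[MeasurableSpace.comap (Y N) mG]
        (({ω | Y N ω = g}).indicator (fun _ => (1 : ℝ))) :=
      stronglyMeasurable_const.indicator ⟨{g}, measurableSet_singleton g, rfl⟩
    have h := condExp_indep_eq (μ := μ) ((hYmeas N).comap_le) (hFle N) hsm (hindep N)
    refine h.trans ?_
    have hmeas : MeasurableSet {ω | Y N ω = g} := hYmeas N (measurableSet_singleton g)
    have : ∫ ω, ({ω | Y N ω = g}).indicator (fun _ => (1 : ℝ)) ω ∂μ = q g := by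
      rw [integral_indicator_const (1 : ℝ) hmeas, measureReal_def, hYlaw N g, smul_eq_mul, mul_one,
        ENNReal.toReal_ofReal (hq0 g)]
    rw [this]
  -- the one-step conditional expectation
  have hstep : ∀ (N : ℕ) (h : E → ℝ),
      μ[fun ω => h (X (N + 1) ω) | F N] =ᵐ[μ] fun ω => ∑ g, q g * h (u (X N ω, g)) := by
    intro N h
    set W : G → Ω → ℝ := fun g => ({ω | Y N ω = g}).indicator (fun _ => (1 : ℝ)) with hW
    set Z : G → Ω → ℝ := fun g ω => h (u (X N ω, g)) with hZ
    have hZSM : ∀ g, StronglyMeasurable[F N] (Z g) := fun g => hSM N fun e => h (u (e, g))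
    have hWmeas : ∀ g, MeasurableSet {ω | Y N ω = g} :=
      fun g => hYmeas N (measurableSet_singleton g)
    have hWint : ∀ g, Integrable (W g) μ :=
      fun g => (integrable_const _).indicator (hWmeas g)
    have hZW : ∀ g, Z g * W g = ({ω | Y N ω = g}).indicator (Z g) := by
      intro g; funext ω
      simp only [Pi.mul_apply, hW, Set.indicator_apply]
      by_cases hg : ω ∈ {ω | Y N ω = g} <;> simp [hg]
    have hZWint : ∀ g, Integrable (Z g * W g) μ := by
      intro g; rw [hZW g]
      exact (hInt N fun e => h (u (e, g))).indicator (hWmeas g)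
    have hdecomp : (fun ω => h (X (N + 1) ω)) = ∑ g : G, Z g * W g := by
      funext ω
      rw [Finset.sum_apply]
      rw [Finset.sum_eq_single (Y N ω)]
      · simp [hZ, hW, Set.indicator_apply, hX]
      · intro b _ hb
        simp [hZ, hW, Set.indicator_apply, Ne.symm hb]
      · simp
    rw [hdecomp]
    refine (condExp_finset_sum (fun g _ => hZWint g) (F N)).trans ?_
    have hterm : ∀ g : G, μ[Z g * W g | F N] =ᵐ[μ] fun ω => q g * h (u (X N ω, g)) := by
      intro g
      refine (condExp_mul_of_stronglyMeasurable_left (hZSM g) (hZWint g) (hWint g)).trans ?_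
      filter_upwards [hcondind N g] with ω hω
      simp only [Pi.mul_apply, hZ, show μ[W g | F N] ω = q g from hω]
      ring
    have hall : ∀ᵐ ω ∂μ, ∀ g : G, (μ[Z g * W g | F N]) ω = q g * h (u (X N ω, g)) :=
      (ae_all_iff).2 fun g => hterm g
    filter_upwards [hall] with ω hω
    rw [Finset.sum_apply]
    exact Finset.sum_congr rfl fun g _ => hω g
  -- matrix algebra
  have hmat : ∀ (m : ℕ) (f : E → ℝ) (i : E),
      ∑ g, q g * (∑ j, (P ^ m) (u (i, g)) j * f j) = ∑ j, (P ^ (m + 1)) i j * f j := by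
    intro m f i
    rw [pow_succ']
    simp only [Matrix.mul_apply, hP, Matrix.of_apply, Finset.sum_mul, ite_mul, zero_mul,
      Finset.mul_sum]
    rw [Finset.sum_comm]
    refine Finset.sum_congr rfl fun g _ => ?_
    rw [Finset.sum_comm]
    refine Finset.sum_congr rfl fun j _ => ?_
    rw [Finset.sum_ite_eq]
    simp [mul_assoc]
  -- main induction
  intro n m f
  induction m generalizing n f with
  | zero =>
    have h1 : μ[fun ω => f (X (n + 0) ω) | F n] = fun ω => f (X n ω) :=
      condExp_of_stronglyMeasurable (hFle n) (hSM n f) (hInt n f)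
    rw [show n + 0 = n from rfl] at h1 ⊢
    rw [h1]
    refine Filter.EventuallyEq.of_eq ?_
    funext ω
    simp [Matrix.one_apply]
  | succ m ih =>
    have hrw : (fun ω => f (X (n + (m + 1)) ω)) = fun ω => f (X ((n + 1) + m) ω) := by
      have : n + (m + 1) = (n + 1) + m := by omega
      rw [this]
    rw [hrw]
    have htower := condExp_condExp_of_le (μ := μ) (f := fun ω => f (X ((n + 1) + m) ω))
      (hFmono n) (hFle (n + 1))
    refine htower.symm.trans ?_
    refine (condExp_congr_ae (ih (n + 1) f)).trans ?_
    refine (hstep n fun e => ∑ j, (P ^ m) e j * f j).trans ?_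
    refine Filter.EventuallyEq.of_eq ?_
    funext ω
    exact hmat m f (X n ω)
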